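/- arXiv:1309.5116 — 3 statements merged into one kernel-verified Lean document; each statement's English description precedes it below -/
import Mathlib

section
/- Let n ≥ 2 be an even integer. For integers 0 ≤ k ≤ n and -n/2 ≤ i ≤ n/2, let u_k[i] be the coefficient of x^{n-k} in the polynomial Π_{m=1}^{n} (x - n - 2i + 2m - 1), and let v_k[i] = Σ_{r=0}^{i+n/2} (-1)^r · C(n+1, r) · (n+2i-2r+1)^{n-k}. Then for all integers i, j with -n/2 ≤ i, j ≤ n/2, Σ_{k=0}^{n} u_k[i] · v_k[j] = 2^n · n! if i = j, and equals 0 otherwise. -/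
open Polynomial Finset

/-- `u_k[i]`: the coefficient of `x^{n-k}` in `Π_{m=1}^{n} (x - n - 2i + 2m - 1)`. -/
noncomputable def rightEig (n : ℕ) (k : ℕ) (i : ℤ) : ℤ :=
  ((∏ m ∈ Finset.Icc 1 n,
      ((Polynomial.X : Polynomial ℤ) -
        Polynomial.C ((n : ℤ) + 2 * i - 2 * (m : ℤ) + 1))).coeff (n - k))

/-- `v_k[i] = Σ_{r=0}^{i+n/2} (-1)^r C(n+1,r) (n+2i-2r+1)^{n-k}`. -/
def leftEig (n : ℕ) (k : ℕ) (i : ℤ) : ℤ :=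
  ∑ r ∈ Finset.range ((i + (n : ℤ) / 2).toNat + 1),
    (-1 : ℤ) ^ r * (Nat.choose (n + 1) r : ℤ) * ((n : ℤ) + 2 * i - 2 * r + 1) ^ (n - k)

/-- The (n+1)-st forward difference of a polynomial of degree ≤ n vanishes. -/
lemma polyDiff : ∀ (n : ℕ) (Q : Polynomial ℤ), Q.natDegree ≤ n →
    ∀ y : ℤ, (fwdDiff (1:ℤ))^[n+1] (fun r : ℤ => Q.eval r) y = 0 := by
  intro n
  induction n with
  | zero =>
    intro Q hQ y
    obtain ⟨c, rfl⟩ := Polynomial.natDegree_eq_zero.mp (Nat.le_zero.mp hQ)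
    simp [fwdDiff]
  | succ n IH =>
    intro Q hQ y
    have hstep : fwdDiff (1:ℤ) (fun r : ℤ => Q.eval r)
        = fun r : ℤ => (Q.comp (X + 1) - Q).eval r := by
      funext r
      simp [fwdDiff, Polynomial.eval_comp]
    rw [Function.iterate_succ_apply, hstep]
    apply IH
    by_cases h0 : Q.natDegree = 0
    · obtain ⟨c, rfl⟩ := Polynomial.natDegree_eq_zero.mp h0
      simp
    · have hQne : Q ≠ 0 := fun h => h0 (by simp [h])
      have hX1 : ((X : Polynomial ℤ) + 1).natDegree = 1 := by
        simpa using Polynomial.natDegree_X_add_C (1 : ℤ)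
      have hlc : (Q.comp (X + 1)).leadingCoeff = Q.leadingCoeff := by
        rw [Polynomial.leadingCoeff_comp (by rw [hX1]; exact one_ne_zero)]
        have : ((X : Polynomial ℤ) + 1).leadingCoeff = 1 := by
          simpa using (Polynomial.monic_X_add_C (1 : ℤ)).leadingCoeff
        rw [this, one_pow, mul_one]
      have hcompne : Q.comp (X + 1) ≠ 0 := by
        intro h
        apply hQne
        have := hlc
        rw [h] at this
        simp at this
        exact Polynomial.leadingCoeff_eq_zero.mp this.symm
      have hnd : (Q.comp (X + 1)).natDegree = Q.natDegree := by
        rw [Polynomial.natDegree_comp, hX1, mul_one]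
      have hdeg : (Q.comp (X + 1)).degree = Q.degree := by
        rw [Polynomial.degree_eq_natDegree hcompne, Polynomial.degree_eq_natDegree hQne, hnd]
      by_cases hz : Q.comp (X + 1) - Q = 0
      · rw [hz]; simp
      · have hlt := Polynomial.degree_sub_lt hdeg hcompne hlc
        have : (Q.comp (X + 1) - Q).natDegree < Q.natDegree := by
          apply Polynomial.natDegree_lt_natDegree hz
          rw [hdeg] at hlt; exact hlt
        omega

/-- The alternating binomial sum of a degree-≤ n polynomial over `r = 0, …, n+1` is zero. -/
lemma altsum (n : ℕ) (Q : Polynomial ℤ) (hQ : Q.natDegree ≤ n) :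
    ∑ r ∈ Finset.range (n+2), (-1:ℤ)^r * (Nat.choose (n+1) r : ℤ) * Q.eval (r:ℤ) = 0 := by
  have h0 := polyDiff n Q hQ 0
  rw [fwdDiff_iter_eq_sum_shift] at h0
  have key : ∑ r ∈ Finset.range (n+2), (-1:ℤ)^r * (Nat.choose (n+1) r : ℤ) * Q.eval (r:ℤ)
      = (-1:ℤ)^(n+1) * ∑ k ∈ Finset.range (n+1+1),
          ((-1:ℤ) ^ (n+1-k) * ((n+1).choose k : ℤ)) • Q.eval (0 + k • (1:ℤ)) := by
    rw [Finset.mul_sum]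
    apply Finset.sum_congr rfl
    intro k hk
    have hkle : k ≤ n + 1 := by simpa using Nat.lt_succ_iff.mp (Finset.mem_range.mp hk)
    have harg : (0 : ℤ) + k • (1:ℤ) = (k : ℤ) := by simp
    have hpow : (-1:ℤ)^(n+1) * (-1:ℤ)^(n+1-k) = (-1:ℤ)^k := by
      rw [← pow_add]
      have : (n+1) + (n+1-k) = k + 2 * (n+1-k) := by omega
      rw [this, pow_add, pow_mul]
      norm_num
    rw [harg, smul_eq_mul]
    calc (-1:ℤ)^k * ((n+1).choose k : ℤ) * Q.eval (k:ℤ)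
        = ((-1:ℤ)^(n+1) * (-1:ℤ)^(n+1-k)) * ((n+1).choose k : ℤ) * Q.eval (k:ℤ) := by rw [hpow]
      _ = (-1:ℤ)^(n+1) * ((-1:ℤ)^(n+1-k) * ((n+1).choose k : ℤ) * Q.eval (k:ℤ)) := by ring
  rw [key, h0, mul_zero]

lemma prod_reflect_factorial (n : ℕ) :
    ∏ m ∈ Finset.Icc 1 n, ((n:ℤ) + 1 - (m:ℤ)) = (Nat.factorial n : ℤ) := by
  have h1 : ∏ m ∈ Finset.Icc 1 n, ((n:ℤ) + 1 - (m:ℤ))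
      = ∏ m ∈ Finset.Icc 1 n, ((m : ℕ) : ℤ) := by
    apply Finset.prod_nbij' (fun m => n + 1 - m) (fun m => n + 1 - m)
    · intro a ha
      simp only [Finset.mem_Icc] at ha ⊢
      omega
    · intro a ha
      simp only [Finset.mem_Icc] at ha ⊢
      omega
    · intro a ha
      simp only [Finset.mem_Icc] at ha
      omega
    · intro a ha
      simp only [Finset.mem_Icc] at ha
      omega
    · intro a ha
      simp only [Finset.mem_Icc] at ha
      have : ((n + 1 - a : ℕ) : ℤ) = (n:ℤ) + 1 - a := by omega
      rw [this]
  rw [h1]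
  rw [← Nat.cast_prod]
  congr 1
  rw [← Finset.Ico_add_one_right_eq_Icc]
  exact Finset.prod_Ico_id_eq_factorial n

theorem stmt9 (n : ℕ) (hneven : Even n) (hn : 2 ≤ n)
    (i j : ℤ) (hi1 : -(n : ℤ) / 2 ≤ i) (hi2 : i ≤ (n : ℤ) / 2)
    (hj1 : -(n : ℤ) / 2 ≤ j) (hj2 : j ≤ (n : ℤ) / 2) :
    ∑ k ∈ Finset.range (n + 1), rightEig n k i * leftEig n k j
      = if i = j then (2 ^ n * Nat.factorial n : ℤ) else 0 := by
  obtain ⟨a, ha⟩ := hneven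
  have hna : (n : ℤ) = 2 * a := by push_cast [ha]; ring
  have hia : -(a:ℤ) ≤ i ∧ i ≤ a := by constructor <;> omega
  have hja : -(a:ℤ) ≤ j ∧ j ≤ a := by constructor <;> omega
  set P : Polynomial ℤ := ∏ m ∈ Finset.Icc 1 n,
      ((Polynomial.X : Polynomial ℤ) -
        Polynomial.C ((n : ℤ) + 2 * i - 2 * (m : ℤ) + 1)) with hP
  set R : ℕ := (j + (n : ℤ) / 2).toNat with hRdef
  have hRint : (R : ℤ) = j + a := by
    rw [hRdef]; omega
  have hRn : R ≤ n := by omega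
  set E : ℕ → ℤ := fun r => ∏ m ∈ Finset.Icc 1 n, (2 * (j - i - (r:ℤ) + (m:ℤ))) with hE
  have hPdeg : P.natDegree ≤ n := by
    calc P.natDegree ≤ ∑ m ∈ Finset.Icc 1 n,
        ((Polynomial.X : Polynomial ℤ) -
          Polynomial.C ((n : ℤ) + 2 * i - 2 * (m : ℤ) + 1)).natDegree :=
          Polynomial.natDegree_prod_le _ _
      _ = ∑ m ∈ Finset.Icc 1 n, 1 := by
          apply Finset.sum_congr rfl; intro m _; exact Polynomial.natDegree_X_sub_C _
      _ = n := by simp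
  -- evaluation of P at the sample points
  have hPeval : ∀ r : ℕ, P.eval ((n:ℤ) + 2*j - 2*(r:ℤ) + 1) = E r := by
    intro r
    rw [hP, Polynomial.eval_prod, hE]
    apply Finset.prod_congr rfl
    intro m _
    simp only [Polynomial.eval_sub, Polynomial.eval_X, Polynomial.eval_C]
    ring
  -- reconstruct eval from coefficient sums
  have hrecon : ∀ y : ℤ, ∑ k ∈ Finset.range (n+1), P.coeff (n - k) * y ^ (n - k)
      = P.eval y := by
    intro y
    rw [Polynomial.eval_eq_sum_range' (Nat.lt_succ_of_le hPdeg) y,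
      ← Finset.sum_range_reflect (fun k => P.coeff k * y ^ k) (n+1)]
    apply Finset.sum_congr rfl
    intro k hk
    simp
  -- the swap
  have hswap : ∑ k ∈ Finset.range (n + 1), rightEig n k i * leftEig n k j
      = ∑ r ∈ Finset.range (R+1),
          (-1:ℤ)^r * (Nat.choose (n+1) r : ℤ) * E r := by
    unfold rightEig leftEig
    simp only [← hP, Finset.mul_sum]
    rw [Finset.sum_comm]
    apply Finset.sum_congr rfl
    intro r _
    have : ∀ k, P.coeff (n - k) * ((-1:ℤ)^r * ((n+1).choose r : ℤ)
          * ((n:ℤ) + 2*j - 2*(r:ℤ) + 1) ^ (n - k))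
        = (-1:ℤ)^r * ((n+1).choose r : ℤ)
          * (P.coeff (n - k) * ((n:ℤ) + 2*j - 2*(r:ℤ) + 1) ^ (n - k)) := by
      intro k; ring
    simp only [this, ← Finset.mul_sum, hrecon, hPeval]
  -- vanishing of E
  have hvanish : ∀ r : ℕ, j - i - (r:ℤ) ≤ -1 → -(n:ℤ) ≤ j - i - (r:ℤ) → E r = 0 := by
    intro r h1 h2
    have hm0 : (i + (r:ℤ) - j).toNat ∈ Finset.Icc 1 n := by
      simp only [Finset.mem_Icc]
      omega
    apply Finset.prod_eq_zero hm0
    have : (((i + (r:ℤ) - j).toNat : ℤ)) = i + r - j := by omega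
    rw [this]
    ring
  -- full alternating sum is zero
  have hG : ∑ r ∈ Finset.range (n+2),
      (-1:ℤ)^r * (Nat.choose (n+1) r : ℤ) * E r = 0 := by
    set Qp : Polynomial ℤ := ∏ m ∈ Finset.Icc 1 n,
        (Polynomial.C (2*(j - i) + 2*(m:ℤ)) - Polynomial.C 2 * Polynomial.X) with hQp
    have hQdeg : Qp.natDegree ≤ n := by
      calc Qp.natDegree ≤ ∑ m ∈ Finset.Icc 1 n,
          (Polynomial.C (2*(j - i) + 2*(m:ℤ)) - Polynomial.C 2 * Polynomial.X).natDegree :=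
            Polynomial.natDegree_prod_le _ _
        _ ≤ ∑ m ∈ Finset.Icc 1 n, 1 := by
            apply Finset.sum_le_sum
            intro m _
            refine le_trans (Polynomial.natDegree_sub_le _ _) ?_
            rw [max_le_iff]
            constructor
            · exact le_trans (Polynomial.natDegree_C _).le (by norm_num)
            · exact le_trans (Polynomial.natDegree_mul_le) (by simp)
        _ ≤ n := by simp
    have hQeval : ∀ r : ℕ, Qp.eval (r:ℤ) = E r := by
      intro r
      rw [hQp, Polynomial.eval_prod, hE]
      apply Finset.prod_congr rfl
      intro m _
      simp only [Polynomial.eval_sub, Polynomial.eval_mul, Polynomial.eval_C, Polynomial.eval_X]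
      ring
    have := altsum n Qp hQdeg
    rw [← this]
    apply Finset.sum_congr rfl
    intro r _
    rw [hQeval]
  have hsplit : (∑ r ∈ Finset.range (R+1), (-1:ℤ)^r * (Nat.choose (n+1) r : ℤ) * E r)
      + ∑ r ∈ Finset.Ico (R+1) (n+2), (-1:ℤ)^r * (Nat.choose (n+1) r : ℤ) * E r
      = ∑ r ∈ Finset.range (n+2), (-1:ℤ)^r * (Nat.choose (n+1) r : ℤ) * E r := by
    simp only [Finset.range_eq_Ico]
    exact Finset.sum_Ico_consecutive (fun r => (-1:ℤ)^r * (Nat.choose (n+1) r : ℤ) * E r) (by omega : 0 ≤ R+1) (by omega : R+1 ≤ n+2)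
  rw [hswap]
  by_cases hij : i = j
  · subst hij
    rw [if_pos rfl]
    -- tail = term at r = n+1
    have htail : ∑ r ∈ Finset.Ico (R+1) (n+2), (-1:ℤ)^r * (Nat.choose (n+1) r : ℤ) * E r
        = -(2 ^ n * Nat.factorial n : ℤ) := by
      rw [Finset.sum_Ico_succ_top (by omega : R + 1 ≤ n + 1)]
      have hz : ∑ r ∈ Finset.Ico (R+1) (n+1), (-1:ℤ)^r * (Nat.choose (n+1) r : ℤ) * E r = 0 := by
        apply Finset.sum_eq_zero
        intro r hr
        rw [Finset.mem_Ico] at hr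
        have : E r = 0 := by
          apply hvanish r <;> omega
        rw [this, mul_zero]
      rw [hz, zero_add]
      have hEn1 : E (n+1) = 2 ^ n * Nat.factorial n := by
        have h1 : E (n+1) = ∏ m ∈ Finset.Icc 1 n, ((-2:ℤ) * ((n:ℤ) + 1 - (m:ℤ))) := by
          simp only [hE]
          apply Finset.prod_congr rfl
          intro m _; push_cast; ring
        rw [h1, Finset.prod_mul_distrib, Finset.prod_const,
          Nat.card_Icc, prod_reflect_factorial]
        have hcard : n + 1 - 1 = n := by omega
        rw [hcard]
        have : ((-2:ℤ)) ^ n = 2 ^ n := by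
          rw [show (-2:ℤ) = -1 * 2 by ring, mul_pow]
          rw [ha, ← two_mul]
          simp [pow_mul]
        rw [this]
      rw [hEn1, Nat.choose_self]
      have : (-1:ℤ)^(n+1) = -1 := by
        rw [pow_succ, ha, ← two_mul, pow_mul]
        norm_num
      rw [this]
      push_cast
      ring
    have := hsplit
    rw [hG, htail] at this
    linarith
  · rw [if_neg hij]
    by_cases hlt : j < i
    · apply Finset.sum_eq_zero
      intro r hr
      rw [Finset.mem_range] at hr
      have : E r = 0 := by
        apply hvanish r <;> omega
      rw [this, mul_zero]
    · have hlt' : i < j := by omega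
      have htail : ∑ r ∈ Finset.Ico (R+1) (n+2), (-1:ℤ)^r * (Nat.choose (n+1) r : ℤ) * E r
          = 0 := by
        apply Finset.sum_eq_zero
        intro r hr
        rw [Finset.mem_Ico] at hr
        have : E r = 0 := by
          apply hvanish r <;> omega
        rw [this, mul_zero]
      have := hsplit
      rw [hG, htail] at this
      linarith
end

section
/- Fix an even integer n ≥ 2, and for each odd integer c ≥ 3 let K_c denote the balanced carries transition matrix base c for adding n numbers, indexed by integers from -n/2 to n/2. Then for all odd integers a, b ≥ 3 and all integers i, j with -n/2 ≤ i, j ≤ n/2, Σ_{m=-n/2}^{n/2} K_a(i,m) · K_b(m,j) = K_{ab}(i,j); that is, K_a K_b = K_{ab} as matrices. -/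
private def bal (c z : ℤ) : ℤ := (z + (c - 1) / 2) / c

private lemma bal_bounds (c z γ : ℤ) (hγ : c = 2 * γ + 1) (hc : 0 < c) :
    -γ ≤ z - c * bal c z ∧ z - c * bal c z ≤ γ := by
  have hh : (c - 1) / 2 = γ := by omega
  have h1 := Int.mul_ediv_add_emod (z + γ) c
  have h2 := Int.emod_nonneg (z + γ) (by omega : c ≠ 0)
  have h3 := Int.emod_lt_of_pos (z + γ) hc
  unfold bal
  rw [hh]
  constructor <;> linarith

private lemma sandwich (a β s t : ℤ) (ha : 0 < a) (hub : a * s ≤ t)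
    (hlb : -t ≤ a * s) (ht : t < a * (β + 1)) : -β ≤ s ∧ s ≤ β := by
  have h1 : a * s < a * (β + 1) := by linarith
  have h2 : a * (-(β + 1)) < a * s := by linarith
  have h3 := lt_of_mul_lt_mul_left h1 ha.le
  have h4 := lt_of_mul_lt_mul_left h2 ha.le
  omega

private lemma bal_unique (c z m γ : ℤ) (hγ : c = 2 * γ + 1)
    (h1 : -γ ≤ z - c * m) (h2 : z - c * m ≤ γ) : m = bal c z := by
  have hγ0 : 0 ≤ γ := by linarith
  have hc : 0 < c := by omega
  obtain ⟨hb1, hb2⟩ := bal_bounds c z γ hγ hc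
  have hd : c * (m - bal c z) = (z - c * bal c z) - (z - c * m) := by ring
  have := sandwich c 0 (m - bal c z) (2 * γ) hc (by linarith) (by linarith) (by linarith)
  omega

/-- The number of `n`-tuples of balanced base-`c` digits `(X_1, …, X_n)`
(integers with `|X_k| ≤ (c-1)/2`) such that
`j*c - (c-1)/2 ≤ i + X_1 + ⋯ + X_n ≤ j*c + (c-1)/2`. -/
noncomputable def balN (c : ℤ) (n : ℕ) (i j : ℤ) : ℕ :=
  (Finset.filter
    (fun X : Fin n → ℤ =>
      j * c - (c - 1) / 2 ≤ i + ∑ k, X k ∧ i + ∑ k, X k ≤ j * c + (c - 1) / 2)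
    (Fintype.piFinset fun _ : Fin n => Finset.Icc (-((c - 1) / 2)) ((c - 1) / 2))).card

/-- The balanced carries transition probability `K_c(i,j) = c^{-n} N_c(i,j)`. -/
noncomputable def balK (c : ℤ) (n : ℕ) (i j : ℤ) : ℚ := (balN c n i j : ℚ) / (c : ℚ) ^ n

set_option maxHeartbeats 1000000 in
theorem stmt12 (n : ℕ) (hneven : Even n) (hn : 2 ≤ n)
    (a b : ℤ) (ha : Odd a) (ha3 : 3 ≤ a) (hb : Odd b) (hb3 : 3 ≤ b)
    (i j : ℤ) (hi1 : -(n : ℤ) / 2 ≤ i) (hi2 : i ≤ (n : ℤ) / 2)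
    (hj1 : -(n : ℤ) / 2 ≤ j) (hj2 : j ≤ (n : ℤ) / 2) :
    ∑ m ∈ Finset.Icc (-(n : ℤ) / 2) ((n : ℤ) / 2), balK a n i m * balK b n m j
      = balK (a * b) n i j := by
  classical
  obtain ⟨α, hA⟩ := ha
  obtain ⟨β, hB⟩ := hb
  have hα : 1 ≤ α := by omega
  have hβ : 1 ≤ β := by omega
  have ha0 : (0:ℤ) < a := by omega
  have hb0 : (0:ℤ) < b := by omega
  have habodd : a * b = 2 * (2*α*β + α + β) + 1 := by rw [hA, hB]; ring
  have hγa : (a - 1)/2 = α := by omega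
  have hγb : (b - 1)/2 = β := by omega
  set δ : ℤ := 2*α*β + α + β with hδ
  have hγab : (a*b - 1)/2 = δ := by omega
  have hδα : δ = α + a * β := by rw [hδ, hA]; ring
  obtain ⟨r, hr⟩ := hneven
  set N : ℤ := (n:ℤ)/2 with hNdef
  have hn2 : (n:ℤ) = 2 * N := by omega
  have hiN1 : -N ≤ i := by omega
  have hiN2 : i ≤ N := by omega
  -- sum bound for digit tuples
  have hsumbd : ∀ (η : ℤ) (X : Fin n → ℤ), (∀ k, -η ≤ X k ∧ X k ≤ η) →
      -((n:ℤ) * η) ≤ ∑ k, X k ∧ (∑ k, X k) ≤ (n:ℤ) * η := by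
    intro η X hX
    constructor
    · calc -((n:ℤ)*η) = ∑ _k : Fin n, (-η) := by
            simp [Finset.sum_const, Finset.card_univ, nsmul_eq_mul, mul_comm]
        _ ≤ ∑ k, X k := Finset.sum_le_sum fun k _ => (hX k).1
    · calc (∑ k, X k) ≤ ∑ _k : Fin n, η := Finset.sum_le_sum fun k _ => (hX k).2
        _ = (n:ℤ)*η := by simp [Finset.sum_const, Finset.card_univ, nsmul_eq_mul]
  -- the key counting identity
  have key : ∑ m ∈ Finset.Icc (-(n:ℤ)/2) ((n:ℤ)/2), (balN a n i m * balN b n m j)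
      = balN (a*b) n i j := by
    simp only [balN, hγa, hγb, hγab]
    set Pa := Fintype.piFinset fun _ : Fin n => Finset.Icc (-α) α with hPa
    set Pb := Fintype.piFinset fun _ : Fin n => Finset.Icc (-β) β with hPb
    have step1 : ∀ m : ℤ,
        (Finset.filter (fun X : Fin n → ℤ =>
            m*a - α ≤ i + ∑ k, X k ∧ i + ∑ k, X k ≤ m*a + α) Pa).card *
        (Finset.filter (fun Y : Fin n → ℤ =>
            j*b - β ≤ m + ∑ k, Y k ∧ m + ∑ k, Y k ≤ j*b + β) Pb).card
        = ((Pa ×ˢ Pb).filter (fun p : (Fin n → ℤ) × (Fin n → ℤ) =>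
             (m*a - α ≤ i + ∑ k, p.1 k ∧ i + ∑ k, p.1 k ≤ m*a + α) ∧
             (j*b - β ≤ m + ∑ k, p.2 k ∧ m + ∑ k, p.2 k ≤ j*b + β))).card := by
      intro m
      rw [← Finset.card_product]
      congr 1
      ext p
      simp only [Finset.mem_filter, Finset.mem_product]
      tauto
    simp only [step1]
    -- uniqueness of the intermediate carry
    have huniq : ∀ (m : ℤ) (X : Fin n → ℤ),
        (m*a - α ≤ i + ∑ k, X k ∧ i + ∑ k, X k ≤ m*a + α) →
        m = bal a (i + ∑ k, X k) := by
      intro m X ⟨h1, h2⟩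
      exact bal_unique a _ m α hA (by linarith) (by linarith)
    have hdisj : ∀ m₁ ∈ Finset.Icc (-(n:ℤ)/2) ((n:ℤ)/2), ∀ m₂ ∈ Finset.Icc (-(n:ℤ)/2) ((n:ℤ)/2),
        m₁ ≠ m₂ → Disjoint
          ((Pa ×ˢ Pb).filter (fun p : (Fin n → ℤ) × (Fin n → ℤ) =>
             (m₁*a - α ≤ i + ∑ k, p.1 k ∧ i + ∑ k, p.1 k ≤ m₁*a + α) ∧
             (j*b - β ≤ m₁ + ∑ k, p.2 k ∧ m₁ + ∑ k, p.2 k ≤ j*b + β)))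
          ((Pa ×ˢ Pb).filter (fun p : (Fin n → ℤ) × (Fin n → ℤ) =>
             (m₂*a - α ≤ i + ∑ k, p.1 k ∧ i + ∑ k, p.1 k ≤ m₂*a + α) ∧
             (j*b - β ≤ m₂ + ∑ k, p.2 k ∧ m₂ + ∑ k, p.2 k ≤ j*b + β))) := by
      intro m₁ _ m₂ _ hne
      rw [Finset.disjoint_left]
      intro p hp1 hp2
      simp only [Finset.mem_filter] at hp1 hp2
      exact hne ((huniq m₁ p.1 hp1.2.1).trans (huniq m₂ p.1 hp2.2.1).symm)
    rw [← Finset.card_biUnion hdisj]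
    have hUnion : (Finset.Icc (-(n:ℤ)/2) ((n:ℤ)/2)).biUnion
          (fun m => (Pa ×ˢ Pb).filter (fun p : (Fin n → ℤ) × (Fin n → ℤ) =>
             (m*a - α ≤ i + ∑ k, p.1 k ∧ i + ∑ k, p.1 k ≤ m*a + α) ∧
             (j*b - β ≤ m + ∑ k, p.2 k ∧ m + ∑ k, p.2 k ≤ j*b + β)))
        = (Pa ×ˢ Pb).filter (fun p : (Fin n → ℤ) × (Fin n → ℤ) =>
            ∃ m ∈ Finset.Icc (-(n:ℤ)/2) ((n:ℤ)/2),
             (m*a - α ≤ i + ∑ k, p.1 k ∧ i + ∑ k, p.1 k ≤ m*a + α) ∧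
             (j*b - β ≤ m + ∑ k, p.2 k ∧ m + ∑ k, p.2 k ≤ j*b + β)) := by
      ext p
      simp only [Finset.mem_biUnion, Finset.mem_filter]
      tauto
    rw [hUnion]
    -- the bijection (X, Y) ↦ X + a • Y
    apply Finset.card_nbij'
      (i := fun p : (Fin n → ℤ) × (Fin n → ℤ) => fun k => p.1 k + a * p.2 k)
      (j := fun Z : Fin n → ℤ => (fun k => Z k - a * bal a (Z k), fun k => bal a (Z k)))
    · -- forward membership
      intro p hp
      simp only [Finset.mem_coe, hPa, hPb, Finset.mem_filter, Finset.mem_product, Fintype.mem_piFinset,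
        Finset.mem_Icc] at hp ⊢
      obtain ⟨⟨hX, hY⟩, m, hmI, ⟨hA1, hA2⟩, ⟨hB1, hB2⟩⟩ := hp
      have hsum : ∑ k, (p.1 k + a * p.2 k) = (∑ k, p.1 k) + a * ∑ k, p.2 k := by
        rw [Finset.sum_add_distrib, Finset.mul_sum]
      refine ⟨fun k => ?_, ?_, ?_⟩
      · have h1 : a * (-β) ≤ a * (p.2 k) :=
          mul_le_mul_of_nonneg_left (hY k).1 ha0.le
        have h2 : a * (p.2 k) ≤ a * β :=
          mul_le_mul_of_nonneg_left (hY k).2 ha0.le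
        constructor <;> [linarith [(hX k).1]; linarith [(hX k).2]]
      · rw [hsum]
        have h3 : a * (j*b - β) ≤ a * (m + ∑ k, p.2 k) :=
          mul_le_mul_of_nonneg_left hB1 ha0.le
        linarith
      · rw [hsum]
        have h4 : a * (m + ∑ k, p.2 k) ≤ a * (j*b + β) :=
          mul_le_mul_of_nonneg_left hB2 ha0.le
        linarith
    · -- backward membership
      intro Z hZ
      simp only [Finset.mem_coe, hPa, hPb, Finset.mem_filter, Finset.mem_product, Fintype.mem_piFinset,
        Finset.mem_Icc] at hZ ⊢
      obtain ⟨hZd, hZ1, hZ2⟩ := hZ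
      have hXd : ∀ k, -α ≤ Z k - a * bal a (Z k) ∧ Z k - a * bal a (Z k) ≤ α :=
        fun k => bal_bounds a (Z k) α hA ha0
      have hYd : ∀ k, -β ≤ bal a (Z k) ∧ bal a (Z k) ≤ β := by
        intro k
        have he : a * (β + 1) = δ + α + 1 := by rw [hδ, hA]; ring
        refine sandwich a β (bal a (Z k)) (δ + α) ha0 ?_ ?_ (by omega)
        · have := (hXd k).1; have := (hZd k).2; linarith
        · have := (hXd k).2; have := (hZd k).1; linarith
      set X : Fin n → ℤ := fun k => Z k - a * bal a (Z k) with hXdef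
      set Y : Fin n → ℤ := fun k => bal a (Z k) with hYdef
      have hZsum : ∑ k, Z k = (∑ k, X k) + a * ∑ k, Y k := by
        rw [Finset.mul_sum, ← Finset.sum_add_distrib]
        refine Finset.sum_congr rfl fun k _ => by simp only [hXdef, hYdef]; ring
      set m : ℤ := bal a (i + ∑ k, X k) with hmdef
      have hr := bal_bounds a (i + ∑ k, X k) α hA ha0
      have hsX := hsumbd α X hXd
      have hsY := hsumbd β Y hYd
      have hmN : -N ≤ m ∧ m ≤ N := by
        have hnα : (n:ℤ) * α = 2 * N * α := by rw [hn2]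
        have he : a * (N + 1) = N * a + 2*α + 1 := by rw [hA]; ring
        refine sandwich a N m (N * a + α) ha0 ?_ ?_ (by omega)
        · have hNa : N * a = N + 2 * N * α := by rw [hA]; ring
          have := hr.1; have := hsX.2; linarith
        · have hNa : N * a = N + 2 * N * α := by rw [hA]; ring
          have := hr.2; have := hsX.1; linarith
      have hsB : -β ≤ m + ∑ k, Y k - j*b ∧ m + ∑ k, Y k - j*b ≤ β := by
        have hid : a * (m + ∑ k, Y k - j*b)
            = (i + ((∑ k, X k) + a * ∑ k, Y k) - j*(a*b)) - (i + ∑ k, X k - a*m) := by ring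
        have he : a * (β + 1) = δ + α + 1 := by rw [hδ, hA]; ring
        refine sandwich a β (m + ∑ k, Y k - j*b) (δ + α) ha0 ?_ ?_ (by omega)
        · rw [hid, ← hZsum]; have := hr.1; linarith
        · rw [hid, ← hZsum]; have := hr.2; linarith
      refine ⟨⟨fun k => hXd k, fun k => hYd k⟩, m, ?_, ⟨?_, ?_⟩, ⟨?_, ?_⟩⟩
      · omega
      · have := hr.1; linarith
      · have := hr.2; linarith
      · have := hsB.1; linarith
      · have := hsB.2; linarith
    · -- left inverse
      intro p hp
      simp only [Finset.mem_coe, hPa, hPb, Finset.mem_filter, Finset.mem_product, Fintype.mem_piFinset,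
        Finset.mem_Icc] at hp
      obtain ⟨⟨hX, hY⟩, -⟩ := hp
      have hbal : ∀ k, bal a (p.1 k + a * p.2 k) = p.2 k := by
        intro k
        refine (bal_unique a _ (p.2 k) α hA ?_ ?_).symm
        · have := (hX k).1; linarith
        · have := (hX k).2; linarith
      refine Prod.ext (funext fun k => ?_) (funext fun k => ?_)
      · show (p.1 k + a * p.2 k) - a * bal a (p.1 k + a * p.2 k) = p.1 k
        rw [hbal k]; ring
      · exact hbal k
    · -- right inverse
      intro Z _
      funext k
      show (Z k - a * bal a (Z k)) + a * bal a (Z k) = Z k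
      ring
  -- deduce the rational identity
  have haQ : ((a:ℚ)) ^ n ≠ 0 := pow_ne_zero _ (by exact_mod_cast ha0.ne')
  have hbQ : ((b:ℚ)) ^ n ≠ 0 := pow_ne_zero _ (by exact_mod_cast hb0.ne')
  calc ∑ m ∈ Finset.Icc (-(n:ℤ)/2) ((n:ℤ)/2), balK a n i m * balK b n m j
      = (↑(∑ m ∈ Finset.Icc (-(n:ℤ)/2) ((n:ℤ)/2), (balN a n i m * balN b n m j)) : ℚ)
          / ((a:ℚ)^n * (b:ℚ)^n) := by
        rw [Nat.cast_sum, Finset.sum_div]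
        refine Finset.sum_congr rfl fun m _ => ?_
        unfold balK
        push_cast
        field_simp
    _ = balK (a*b) n i j := by
        rw [key]; unfold balK; push_cast [mul_pow]; ring
end

section
/- Let b ≥ 3 be an odd integer, set m = (b-1)/2, and let M be the m×m real matrix with (j,k) entry min(j,k). For every integer ℓ ≥ 0, the sum of all entries of M^ℓ satisfies Σ_{i=1}^{m} Σ_{j=1}^{m} (M^ℓ)_{ij} = (4/b) · Σ_{r=1}^{m} λ_r^ℓ · v_r², and the row-weighted sum satisfies Σ_{i=1}^{m} Σ_{j=1}^{m} i·(M^ℓ)_{ij} = (4/b) · Σ_{r=1}^{m} λ_r^ℓ · v_r · w_r, where λ_r = 1/(4·sin²((2r-1)π/(2b))), v_r = Σ_{j=1}^{m} sin((2r-1)jπ/b), and w_r = Σ_{j=1}^{m} j·sin((2r-1)jπ/b). -/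
/-- The `m × m` matrix with `(j,k)` entry `min(j,k)`, where rows and columns are
indexed `1, …, m` (so `Fin m` index `j` corresponds to row `j+1`). -/
def minMat (m : ℕ) : Matrix (Fin m) (Fin m) ℝ :=
  Matrix.of fun j k : Fin m => (min ((j : ℕ) + 1) ((k : ℕ) + 1) : ℝ)

/-- `λ_r = 1/(4 sin²((2r-1)π/(2b)))`. -/
noncomputable def lamEig (b : ℤ) (r : ℕ) : ℝ :=
  1 / (4 * Real.sin ((2 * (r : ℝ) - 1) * Real.pi / (2 * (b : ℝ))) ^ 2)

/-- `v_r = Σ_{j=1}^{m} sin((2r-1)jπ/b)` with `m = (b-1)/2`. -/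
noncomputable def vSum (b : ℤ) (m : ℕ) (r : ℕ) : ℝ :=
  ∑ j ∈ Finset.Icc 1 m, Real.sin ((2 * (r : ℝ) - 1) * (j : ℝ) * Real.pi / (b : ℝ))

/-- `w_r = Σ_{j=1}^{m} j sin((2r-1)jπ/b)` with `m = (b-1)/2`. -/
noncomputable def wSum (b : ℤ) (m : ℕ) (r : ℕ) : ℝ :=
  ∑ j ∈ Finset.Icc 1 m, (j : ℝ) * Real.sin ((2 * (r : ℝ) - 1) * (j : ℝ) * Real.pi / (b : ℝ))

open Real Finset Matrix


lemma two_sin_mul_sin (s x : ℝ) : 2 * Real.sin s * Real.sin x = Real.cos (x - s) - Real.cos (x + s) := by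
  rw [Real.cos_sub, Real.cos_add]; ring

lemma two_sin_mul_cos (s x : ℝ) : 2 * Real.sin s * Real.cos x = Real.sin (x + s) - Real.sin (x - s) := by
  rw [Real.sin_add, Real.sin_sub]; ring

/-- telescoping sine sum over `Icc i m`. -/
lemma sum_sin_Icc (s : ℝ) (i m : ℕ) (hi : 1 ≤ i) (him : i ≤ m) :
    2 * Real.sin s * ∑ k ∈ Icc i m, Real.sin (2 * k * s)
      = Real.cos ((2 * i - 1) * s) - Real.cos ((2 * m + 1) * s) := by
  induction m, him using Nat.le_induction with
  | base =>
    rw [Icc_self, sum_singleton, two_sin_mul_sin]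
    ring_nf
  | succ n hn ih =>
    rw [Finset.sum_Icc_succ_top (by omega), mul_add, ih, two_sin_mul_sin]
    push_cast
    ring_nf

/-- telescoping cosine sum. -/
lemma sum_cos_Icc (s : ℝ) (m : ℕ) :
    2 * Real.sin s * ∑ j ∈ Icc 1 m, Real.cos (2 * j * s)
      = Real.sin ((2 * m + 1) * s) - Real.sin s := by
  induction m with
  | zero => simp
  | succ n ih =>
    rw [Finset.sum_Icc_succ_top (by omega), mul_add, ih, two_sin_mul_cos]
    push_cast
    ring_nf

/-- telescoping odd-cosine sum. -/
lemma sum_oddcos_Icc (s : ℝ) (j : ℕ) :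
    2 * Real.sin s * ∑ i ∈ Icc 1 j, Real.cos ((2 * i - 1) * s)
      = Real.sin (2 * j * s) := by
  induction j with
  | zero => simp
  | succ n ih =>
    rw [Finset.sum_Icc_succ_top (by omega), mul_add, ih, two_sin_mul_cos]
    push_cast
    ring_nf


/-- Eigenvector identity for the min matrix. -/
lemma min_eig (s : ℝ) (m : ℕ) (hs : Real.sin s ≠ 0) (hm : Real.cos ((2 * m + 1) * s) = 0)
    (j : ℕ) (hj1 : 1 ≤ j) (hjm : j ≤ m) :
    ∑ k ∈ Icc 1 m, ((min j k : ℕ) : ℝ) * Real.sin (2 * k * s)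
      = Real.sin (2 * j * s) / (4 * Real.sin s ^ 2) := by
  have hmin : ∀ k : ℕ, ((min j k : ℕ) : ℝ) = ∑ i ∈ Icc 1 j, if i ≤ k then (1:ℝ) else 0 := by
    intro k
    have hfil : (Icc 1 j).filter (fun i => i ≤ k) = Icc 1 (min j k) := by
      ext x; simp [Finset.mem_filter, Finset.mem_Icc]; omega
    rw [← Finset.sum_filter, hfil, Finset.sum_const, Nat.card_Icc]
    simp
  have step1 : ∑ k ∈ Icc 1 m, ((min j k : ℕ) : ℝ) * Real.sin (2 * k * s)
      = ∑ i ∈ Icc 1 j, ∑ k ∈ Icc i m, Real.sin (2 * k * s) := by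
    simp_rw [hmin, Finset.sum_mul, ite_mul, one_mul, zero_mul]
    rw [Finset.sum_comm]
    refine Finset.sum_congr rfl fun i hi => ?_
    simp only [Finset.mem_Icc] at hi
    rw [← Finset.sum_filter]
    congr 1
    ext x; simp only [Finset.mem_filter, Finset.mem_Icc]
    omega
  have key : 4 * Real.sin s ^ 2 * ∑ k ∈ Icc 1 m, ((min j k : ℕ) : ℝ) * Real.sin (2 * k * s)
      = Real.sin (2 * j * s) := by
    rw [step1]
    have h2 : ∀ i ∈ Icc 1 j, 2 * Real.sin s * ∑ k ∈ Icc i m, Real.sin (2 * k * s)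
        = Real.cos ((2 * i - 1) * s) := by
      intro i hi
      simp only [Finset.mem_Icc] at hi
      rw [sum_sin_Icc s i m hi.1 (le_trans hi.2 hjm), hm, sub_zero]
    calc 4 * Real.sin s ^ 2 * ∑ i ∈ Icc 1 j, ∑ k ∈ Icc i m, Real.sin (2 * k * s)
        = 2 * Real.sin s * ∑ i ∈ Icc 1 j, (2 * Real.sin s * ∑ k ∈ Icc i m, Real.sin (2 * k * s)) := by
          rw [Finset.mul_sum, Finset.mul_sum]
          refine Finset.sum_congr rfl fun i _ => by ring
      _ = 2 * Real.sin s * ∑ i ∈ Icc 1 j, Real.cos ((2 * i - 1) * s) := by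
          rw [Finset.sum_congr rfl h2]
      _ = Real.sin (2 * j * s) := sum_oddcos_Icc s j
  have h4 : 4 * Real.sin s ^ 2 ≠ 0 := by positivity
  rw [eq_div_iff h4]
  push_cast at key ⊢
  linarith [key]


lemma cos_sum_neg_half (s : ℝ) (m : ℕ) (hs : Real.sin s ≠ 0)
    (h0 : Real.sin ((2 * m + 1) * s) = 0) :
    ∑ j ∈ Icc 1 m, Real.cos (2 * j * s) = -(1/2) := by
  have h := sum_cos_Icc s m
  rw [h0] at h
  have h3 : Real.sin s * (2 * ∑ j ∈ Icc 1 m, Real.cos (2 * j * s)) = Real.sin s * (-1) := by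
    linarith
  have h4 := mul_left_cancel₀ hs h3
  linarith

lemma sin_ne_zero_of (b : ℤ) (hb : 0 < b) (n : ℤ) (hn : n ≠ 0) (hnb : |n| < b) :
    Real.sin ((n : ℝ) * Real.pi / b) ≠ 0 := by
  intro h
  rw [Real.sin_eq_zero_iff] at h
  obtain ⟨k, hk⟩ := h
  have hbne : (b : ℝ) ≠ 0 := by
    have := hb.ne'
    exact_mod_cast this
  have hpi := Real.pi_ne_zero
  have h1 : (k:ℝ) * Real.pi * b = n * Real.pi := by
    field_simp at hk
    rw [← hk]; ring
  have h2 : ((k * b : ℤ) : ℝ) * Real.pi = (n:ℝ) * Real.pi := by push_cast; linarith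
  have h3 : ((k * b : ℤ) : ℝ) = (n : ℝ) := mul_right_cancel₀ hpi h2
  have h4 : k * b = n := by exact_mod_cast h3
  rcases eq_or_ne k 0 with rfl | hk0
  · omega
  · have : b ≤ |k * b| := by
      rw [abs_mul]
      calc b = 1 * b := (one_mul b).symm
        _ ≤ |k| * |b| := by
            apply mul_le_mul (Int.one_le_abs hk0) (le_abs_self b) (by omega) (by positivity)
    rw [h4] at this
    omega

lemma orth (b : ℤ) (m : ℕ) (hm : b = 2 * (m : ℤ) + 1) (r t : ℕ)
    (hr1 : 1 ≤ r) (hrm : r ≤ m) (ht1 : 1 ≤ t) (htm : t ≤ m) :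
    ∑ j ∈ Icc 1 m, Real.sin ((2 * (r:ℝ) - 1) * j * Real.pi / b)
        * Real.sin ((2 * (t:ℝ) - 1) * j * Real.pi / b)
      = if r = t then (b:ℝ)/4 else 0 := by
  have hb0 : (0:ℤ) < b := by omega
  have hbR : (b : ℝ) = 2 * m + 1 := by exact_mod_cast congrArg (Int.cast : ℤ → ℝ) hm
  have hbne : (b : ℝ) ≠ 0 := by positivity
  set α : ℝ := ((r:ℝ) - t) * Real.pi / b with hα
  set β : ℝ := ((r:ℝ) + t - 1) * Real.pi / b with hβ
  have hper : ∀ j : ℕ, Real.sin ((2 * (r:ℝ) - 1) * j * Real.pi / b)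
        * Real.sin ((2 * (t:ℝ) - 1) * j * Real.pi / b)
      = (Real.cos (2 * j * α) - Real.cos (2 * j * β)) / 2 := by
    intro j
    rw [show (2 * (j:ℝ)) * α = ((2 * (r:ℝ) - 1) * j * Real.pi / b) - ((2 * (t:ℝ) - 1) * j * Real.pi / b) by rw [hα]; field_simp; ring,
        show (2 * (j:ℝ)) * β = ((2 * (r:ℝ) - 1) * j * Real.pi / b) + ((2 * (t:ℝ) - 1) * j * Real.pi / b) by rw [hβ]; field_simp; ring,
        Real.cos_sub, Real.cos_add]
    ring
  rw [Finset.sum_congr rfl fun j _ => hper j, ← Finset.sum_div, Finset.sum_sub_distrib]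
  have hβne : Real.sin β ≠ 0 := by
    have hq : β = (((r:ℤ) + t - 1 : ℤ) : ℝ) * Real.pi / b := by rw [hβ]; push_cast; ring_nf
    rw [hq]
    exact sin_ne_zero_of b hb0 _ (by omega) (by rw [abs_of_nonneg (by omega)]; omega)
  have hβ0 : Real.sin ((2 * (m:ℝ) + 1) * β) = 0 := by
    have hq : (2 * (m:ℝ) + 1) * β = (((r:ℤ) + t - 1 : ℤ) : ℝ) * Real.pi := by
      rw [hβ, ← hbR]; push_cast; field_simp; try ring
    rw [hq, Real.sin_int_mul_pi]
  have hcβ : ∑ j ∈ Icc 1 m, Real.cos (2 * j * β) = -(1/2) :=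
    cos_sum_neg_half β m hβne hβ0
  rw [hcβ]
  rcases eq_or_ne r t with rfl | hrt
  · have hα0 : α = 0 := by rw [hα]; ring
    have hcα : ∑ j ∈ Icc 1 m, Real.cos (2 * (j:ℝ) * α) = m := by
      simp [hα0, Nat.card_Icc]
    rw [hcα, if_pos rfl, hbR]
    ring
  · have hαne : Real.sin α ≠ 0 := by
      have hq : α = (((r:ℤ) - t : ℤ) : ℝ) * Real.pi / b := by rw [hα]; push_cast; ring_nf
      rw [hq]
      exact sin_ne_zero_of b hb0 _ (by omega) (by rw [abs_sub_lt_iff]; omega)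
    have hα0 : Real.sin ((2 * (m:ℝ) + 1) * α) = 0 := by
      have hq : (2 * (m:ℝ) + 1) * α = (((r:ℤ) - t : ℤ) : ℝ) * Real.pi := by
        rw [hα, ← hbR]; push_cast; field_simp; try ring
      rw [hq, Real.sin_int_mul_pi]
    have hcα : ∑ j ∈ Icc 1 m, Real.cos (2 * j * α) = -(1/2) :=
      cos_sum_neg_half α m hαne hα0
    rw [hcα, if_neg hrt]
    ring


lemma finsum_shift (m : ℕ) (f : ℕ → ℝ) :
    ∑ k : Fin m, f ((k : ℕ) + 1) = ∑ k ∈ Icc 1 m, f k := by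
  rw [Fin.sum_univ_eq_sum_range (fun k => f (k + 1)) m, ← Finset.Ico_add_one_right_eq_Icc, Finset.sum_Ico_eq_sum_range]
  simp [add_comm]

set_option maxHeartbeats 1000000 in
theorem stmt17 (b : ℤ) (hodd : Odd b) (hb : 3 ≤ b) (m : ℕ) (hm : b = 2 * (m : ℤ) + 1)
    (l : ℕ) :
    (∑ i : Fin m, ∑ j : Fin m, (minMat m ^ l) i j
        = (4 / (b : ℝ)) * ∑ r ∈ Finset.Icc 1 m, lamEig b r ^ l * vSum b m r ^ 2) ∧
    (∑ i : Fin m, ∑ j : Fin m, (((i : ℕ) + 1 : ℕ) : ℝ) * (minMat m ^ l) i j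
        = (4 / (b : ℝ)) * ∑ r ∈ Finset.Icc 1 m, lamEig b r ^ l * vSum b m r * wSum b m r) := by
  have hbR : (b : ℝ) = 2 * m + 1 := by exact_mod_cast congrArg (Int.cast : ℤ → ℝ) hm
  have hbpos : (0:ℝ) < b := by rw [hbR]; positivity
  have hbne : (b : ℝ) ≠ 0 := hbpos.ne'
  have hm1 : 1 ≤ m := by omega
  -- the eigenvector matrix
  set P : Matrix (Fin m) (Fin m) ℝ :=
    Matrix.of (fun j r : Fin m =>
      Real.sin ((2 * ((r:ℕ):ℝ) + 1) * (((j:ℕ):ℝ) + 1) * Real.pi / b)) with hP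
  set D : Matrix (Fin m) (Fin m) ℝ :=
    Matrix.diagonal (fun r : Fin m => lamEig b ((r:ℕ) + 1)) with hD
  set Q : Matrix (Fin m) (Fin m) ℝ := ((4:ℝ)/b) • Pᵀ with hQ
  -- basic angle facts
  have hsin_pos : ∀ r : Fin m, 0 < Real.sin ((2 * ((r:ℕ):ℝ) + 1) * Real.pi / (2 * b)) := by
    intro r
    apply Real.sin_pos_of_pos_of_lt_pi
    · have : (0:ℝ) < 2 * ((r:ℕ):ℝ) + 1 := by positivity
      positivity
    · rw [div_lt_iff₀ (by positivity)]
      have hr : ((r:ℕ):ℝ) < m := by exact_mod_cast r.2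
      nlinarith [Real.pi_pos]
  -- eigen-relation: M * P = P * D
  have hMP : minMat m * P = P * D := by
    ext j r
    rw [Matrix.mul_apply, hD, Matrix.mul_diagonal]
    set s : ℝ := (2 * ((r:ℕ):ℝ) + 1) * Real.pi / (2 * b) with hs
    have hsne : Real.sin s ≠ 0 := (hsin_pos r).ne'
    have hcos : Real.cos ((2 * (m:ℝ) + 1) * s) = 0 := by
      rw [Real.cos_eq_zero_iff]
      exact ⟨(r:ℕ), by rw [hs, ← hbR]; field_simp; norm_cast⟩
    have hkey := min_eig s m hsne hcos ((j:ℕ)+1) (by omega) (by have := j.2; omega)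
    have hL : ∑ k : Fin m, minMat m j k * P k r
        = ∑ k ∈ Icc 1 m, ((min ((j:ℕ)+1) k : ℕ) : ℝ) * Real.sin (2 * k * s) := by
      rw [← finsum_shift m (fun k => ((min ((j:ℕ)+1) k : ℕ) : ℝ) * Real.sin (2 * k * s))]
      refine Finset.sum_congr rfl fun k _ => ?_
      simp only [minMat, hP, Matrix.of_apply]
      push_cast
      congr 2
      rw [hs]; field_simp
    rw [hL, hkey]
    have hlam : lamEig b ((r:ℕ)+1) = 1 / (4 * Real.sin s ^ 2) := by
      unfold lamEig
      rw [hs]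
      congr 3
      push_cast; ring
    have hPjr : P j r = Real.sin (2 * (((j:ℕ)+1 : ℕ):ℝ) * s) := by
      show Real.sin ((2 * ((r:ℕ):ℝ) + 1) * (((j:ℕ):ℝ)+1) * Real.pi / b)
          = Real.sin (2 * (((j:ℕ)+1 : ℕ):ℝ) * s)
      congr 1
      rw [hs]; push_cast; field_simp
    rw [hPjr, hlam]
    push_cast
    ring
  -- orthogonality: Pᵀ * P = (b/4) • 1
  have hPtP : Pᵀ * P = ((b:ℝ)/4) • (1 : Matrix (Fin m) (Fin m) ℝ) := by
    ext r t
    rw [Matrix.mul_apply, Matrix.smul_apply, Matrix.one_apply]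
    have ho := orth b m hm ((r:ℕ)+1) ((t:ℕ)+1) (by omega) (by have := r.2; omega)
      (by omega) (by have := t.2; omega)
    have hL : ∑ k : Fin m, Pᵀ r k * P k t
        = ∑ j ∈ Icc 1 m, Real.sin ((2 * (((r:ℕ)+1 : ℕ):ℝ) - 1) * j * Real.pi / b)
            * Real.sin ((2 * (((t:ℕ)+1 : ℕ):ℝ) - 1) * j * Real.pi / b) := by
      rw [← finsum_shift m (fun j => Real.sin ((2 * (((r:ℕ)+1 : ℕ):ℝ) - 1) * j * Real.pi / b)
            * Real.sin ((2 * (((t:ℕ)+1 : ℕ):ℝ) - 1) * j * Real.pi / b))]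
      refine Finset.sum_congr rfl fun k _ => ?_
      show Real.sin ((2 * ((r:ℕ):ℝ) + 1) * (((k:ℕ):ℝ)+1) * Real.pi / b)
            * Real.sin ((2 * ((t:ℕ):ℝ) + 1) * (((k:ℕ):ℝ)+1) * Real.pi / b) = _
      congr 2 <;> push_cast <;> ring
    rw [hL, ho]
    have : ((r:ℕ)+1 = (t:ℕ)+1) ↔ (r = t) := by
      constructor
      · intro h; exact Fin.ext (by omega)
      · intro h; rw [h]
    simp only [this]
    split <;> simp
  have hQP : Q * P = 1 := by
    rw [hQ, Matrix.smul_mul, hPtP, smul_smul]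
    rw [show (4:ℝ)/b * ((b:ℝ)/4) = 1 by field_simp]
    rw [one_smul]
  have hPQ : P * Q = 1 := mul_eq_one_comm.mpr hQP
  -- spectral decomposition of powers
  have hpow : minMat m ^ l = P * (D ^ l * Q) := by
    induction l with
    | zero => rw [pow_zero, pow_zero, one_mul, hPQ]
    | succ n ih =>
      calc minMat m ^ (n+1) = minMat m * minMat m ^ n := pow_succ' _ _
        _ = minMat m * (P * (D^n * Q)) := by rw [ih]
        _ = (minMat m * P) * (D^n * Q) := by rw [Matrix.mul_assoc]
        _ = (P * D) * (D^n * Q) := by rw [hMP]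
        _ = P * (D^(n+1) * Q) := by
            rw [Matrix.mul_assoc, ← Matrix.mul_assoc D, ← pow_succ']
  have hDl : D ^ l = Matrix.diagonal (fun r : Fin m => lamEig b ((r:ℕ)+1) ^ l) := by
    rw [hD, Matrix.diagonal_pow]
    congr 1
  have hentry : ∀ i j : Fin m, (minMat m ^ l) i j
      = ∑ r : Fin m, lamEig b ((r:ℕ)+1) ^ l * (4/(b:ℝ)) * (P i r * P j r) := by
    intro i j
    rw [hpow, Matrix.mul_apply]
    refine Finset.sum_congr rfl fun r _ => ?_
    rw [hDl, Matrix.diagonal_mul, hQ, Matrix.smul_apply, Matrix.transpose_apply,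
      smul_eq_mul]
    ring
  -- sums of eigenvector entries
  have hv : ∀ r : Fin m, ∑ i : Fin m, P i r = vSum b m ((r:ℕ)+1) := by
    intro r
    unfold vSum
    rw [← finsum_shift m (fun j =>
      Real.sin ((2 * ((((r:ℕ)+1 : ℕ)):ℝ) - 1) * (j : ℝ) * Real.pi / b))]
    refine Finset.sum_congr rfl fun i _ => ?_
    show Real.sin ((2 * ((r:ℕ):ℝ) + 1) * (((i:ℕ):ℝ)+1) * Real.pi / b) = _
    congr 2
    push_cast; ring
  have hw : ∀ r : Fin m, ∑ i : Fin m, (((i:ℕ):ℝ)+1) * P i r = wSum b m ((r:ℕ)+1) := by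
    intro r
    unfold wSum
    rw [← finsum_shift m (fun j => (j : ℝ) *
      Real.sin ((2 * ((((r:ℕ)+1 : ℕ)):ℝ) - 1) * (j : ℝ) * Real.pi / b))]
    refine Finset.sum_congr rfl fun i _ => ?_
    show (((i:ℕ):ℝ)+1) * Real.sin ((2 * ((r:ℕ):ℝ) + 1) * (((i:ℕ):ℝ)+1) * Real.pi / b) = _
    congr 2
    · push_cast; ring
    · push_cast; ring
  constructor
  · calc ∑ i : Fin m, ∑ j : Fin m, (minMat m ^ l) i j
        = ∑ i : Fin m, ∑ j : Fin m, ∑ r : Fin m,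
            lamEig b ((r:ℕ)+1) ^ l * (4/(b:ℝ)) * (P i r * P j r) := by
          exact Finset.sum_congr rfl fun i _ => Finset.sum_congr rfl fun j _ => hentry i j
      _ = ∑ r : Fin m, ∑ i : Fin m, ∑ j : Fin m,
            lamEig b ((r:ℕ)+1) ^ l * (4/(b:ℝ)) * (P i r * P j r) := by
          exact (Finset.sum_congr rfl fun i _ => Finset.sum_comm).trans Finset.sum_comm
      _ = ∑ r : Fin m, lamEig b ((r:ℕ)+1) ^ l * (4/(b:ℝ)) *
            ((∑ i : Fin m, P i r) * (∑ j : Fin m, P j r)) := by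
          refine Finset.sum_congr rfl fun r _ => ?_
          rw [Finset.sum_mul_sum, Finset.mul_sum]
          exact Finset.sum_congr rfl fun i _ => by rw [Finset.mul_sum]
      _ = ∑ r : Fin m, lamEig b ((r:ℕ)+1) ^ l * (4/(b:ℝ)) * vSum b m ((r:ℕ)+1) ^ 2 := by
          refine Finset.sum_congr rfl fun r _ => ?_
          rw [hv r]; ring
      _ = 4 / (b:ℝ) * ∑ r ∈ Icc 1 m, lamEig b r ^ l * vSum b m r ^ 2 := by
          rw [← finsum_shift m (fun r => lamEig b r ^ l * vSum b m r ^ 2), Finset.mul_sum]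
          exact Finset.sum_congr rfl fun r _ => by ring
  · calc ∑ i : Fin m, ∑ j : Fin m, (((i:ℕ) + 1 : ℕ) : ℝ) * (minMat m ^ l) i j
        = ∑ i : Fin m, ∑ j : Fin m, ∑ r : Fin m,
            lamEig b ((r:ℕ)+1) ^ l * (4/(b:ℝ)) * (((((i:ℕ):ℝ)+1) * P i r) * P j r) := by
          refine Finset.sum_congr rfl fun i _ => Finset.sum_congr rfl fun j _ => ?_
          rw [hentry i j, Finset.mul_sum]
          refine Finset.sum_congr rfl fun r _ => ?_
          push_cast; ring
      _ = ∑ r : Fin m, ∑ i : Fin m, ∑ j : Fin m,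
            lamEig b ((r:ℕ)+1) ^ l * (4/(b:ℝ)) * (((((i:ℕ):ℝ)+1) * P i r) * P j r) := by
          exact (Finset.sum_congr rfl fun i _ => Finset.sum_comm).trans Finset.sum_comm
      _ = ∑ r : Fin m, lamEig b ((r:ℕ)+1) ^ l * (4/(b:ℝ)) *
            ((∑ i : Fin m, (((i:ℕ):ℝ)+1) * P i r) * (∑ j : Fin m, P j r)) := by
          refine Finset.sum_congr rfl fun r _ => ?_
          rw [Finset.sum_mul_sum, Finset.mul_sum]
          exact Finset.sum_congr rfl fun i _ => by rw [Finset.mul_sum]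
      _ = ∑ r : Fin m, lamEig b ((r:ℕ)+1) ^ l * (4/(b:ℝ)) *
            (vSum b m ((r:ℕ)+1) * wSum b m ((r:ℕ)+1)) := by
          refine Finset.sum_congr rfl fun r _ => ?_
          rw [hv r, hw r]; ring
      _ = 4 / (b:ℝ) * ∑ r ∈ Icc 1 m, lamEig b r ^ l * vSum b m r * wSum b m r := by
          rw [← finsum_shift m (fun r => lamEig b r ^ l * vSum b m r * wSum b m r),
            Finset.mul_sum]
          exact Finset.sum_congr rfl fun r _ => by ring
end
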